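/- Let l, m ∈ ℕ with l ≥ 1 and m ≥ 1, and let z ∈ ℂ⁻ with exp_l(m²·π) < |z|. Then |log^{[l]}(z)| < |z|^{1/(2^l·m)}. (Claim 1 in the proof of Proposition 5.81 of the paper.) -/

import Mathlib

/-- The `j`-fold iterate `log^{[j]}` of the principal complex logarithm. -/
noncomputable def logIter : ℕ → ℂ → ℂ
  | 0, w => w
  | j + 1, w => Complex.log (logIter j w)

/-- The `j`-fold iterated real exponential `exp_j`. -/
noncomputable def expIter : ℕ → ℝ → ℝ
  | 0, x => x
  | j + 1, x => Real.exp (expIter j x)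

lemma logIter_shift (j : ℕ) (z : ℂ) :
    logIter (j + 1) z = logIter j (Complex.log z) := by
  induction j with
  | zero => simp [logIter]
  | succ k ih =>
      show Complex.log (logIter (k + 1) z) = Complex.log (logIter k (Complex.log z))
      rw [ih]

lemma self_le_expIter (j : ℕ) (x : ℝ) : x ≤ expIter j x := by
  induction j with
  | zero => simp [expIter]
  | succ k ih =>
      have h := Real.add_one_le_exp (expIter k x)
      show x ≤ Real.exp (expIter k x)
      linarith

lemma num_key : 16 * Real.sqrt 2 < Real.pi * Real.exp 1 ^ 2 := by
  have hs : Real.sqrt 2 ≤ 1.41422 := by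
    rw [show (1.41422 : ℝ) = Real.sqrt (1.41422 ^ 2) by
      rw [Real.sqrt_sq (by norm_num)]]
    exact Real.sqrt_le_sqrt (by norm_num)
  have he : (2.718281 : ℝ) < Real.exp 1 := by
    linarith [Real.exp_one_gt_d9]
  have hpi : (3.141592 : ℝ) < Real.pi := Real.pi_gt_d6
  have he2 : (7.389051 : ℝ) < Real.exp 1 ^ 2 := by nlinarith [he]
  nlinarith [he2, hpi, hs]

lemma exp_quad (t : ℝ) (ht : 0 ≤ t) :
    Real.exp 1 ^ 2 / 4 * t ^ 2 ≤ Real.exp t := by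
  have h : t / 2 ≤ Real.exp (t / 2 - 1) := by
    have := Real.add_one_le_exp (t / 2 - 1)
    linarith
  have h2 : (t / 2) ^ 2 ≤ Real.exp (t / 2 - 1) ^ 2 := by
    nlinarith [Real.exp_pos (t / 2 - 1)]
  have h3 : Real.exp (t / 2 - 1) ^ 2 = Real.exp (t - 2) := by
    rw [sq, ← Real.exp_add]; ring_nf
  have h4 : Real.exp 1 ^ 2 = Real.exp 2 := by
    rw [sq, ← Real.exp_add]; norm_num
  have h5 : Real.exp (t - 2) * Real.exp 2 = Real.exp t := by
    rw [← Real.exp_add]; ring_nf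
  have hE : 0 < Real.exp 2 := Real.exp_pos 2
  rw [h4]
  nlinarith [h2, h3, h5, hE]

lemma abs_log_lt_sqrt_two (z : ℂ) (hpiL : Real.pi < Real.log (‖z‖)) :
    ‖Complex.log z‖ < Real.sqrt 2 * Real.log (‖z‖) := by
  set L := Real.log (‖z‖) with hL
  have hL0 : 0 < L := lt_trans Real.pi_pos hpiL
  have hsq : ‖Complex.log z‖ ^ 2 = L ^ 2 + Complex.arg z ^ 2 := by
    rw [Complex.sq_norm, Complex.normSq_apply, Complex.log_re, Complex.log_im]
    ring
  have harg : Complex.arg z ^ 2 ≤ Real.pi ^ 2 := by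
    have h1 := Complex.abs_arg_le_pi z
    nlinarith [sq_abs (Complex.arg z), h1, abs_nonneg (Complex.arg z), Real.pi_pos]
  have hS : Real.sqrt 2 ^ 2 = 2 := Real.sq_sqrt (by norm_num)
  have h : ‖Complex.log z‖ ^ 2 < (Real.sqrt 2 * L) ^ 2 := by
    rw [hsq, mul_pow, hS]
    nlinarith [harg, hpiL, Real.pi_pos]
  have hSL : 0 ≤ Real.sqrt 2 * L := by positivity
  exact lt_of_pow_lt_pow_left₀ 2 hSL h

lemma base_case (μ : ℝ) (hm : 1 ≤ μ) (z : ℂ)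
    (hz : Real.exp (μ ^ 2 * Real.pi) < ‖z‖) :
    ‖Complex.log z‖ < ‖z‖ ^ (1 / (2 * μ)) := by
  have hr0 : 0 < ‖z‖ := lt_trans (Real.exp_pos _) hz
  set L := Real.log (‖z‖) with hLdef
  have hL : μ ^ 2 * Real.pi < L := (Real.lt_log_iff_exp_lt hr0).2 hz
  have hmu2 : 1 ≤ μ ^ 2 := by nlinarith
  have hpiL : Real.pi < L := by nlinarith [Real.pi_pos]
  have h1 : ‖Complex.log z‖ < Real.sqrt 2 * L :=
    abs_log_lt_sqrt_two z hpiL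
  have hrpow : ‖z‖ ^ (1 / (2 * μ)) = Real.exp (L * (1 / (2 * μ))) :=
    Real.rpow_def_of_pos hr0 _
  rw [hrpow]
  set t := L * (1 / (2 * μ)) with htdef
  have hm0 : (0 : ℝ) < μ := by linarith
  have hLt : L = 2 * μ * t := by rw [htdef]; field_simp
  have hL0 : 0 < L := lt_trans Real.pi_pos hpiL
  have htpos : 0 < t := by
    apply mul_pos hL0; positivity
  have hmt : μ * Real.pi < 2 * t := by nlinarith [hL, hm0]
  have hS : (0 : ℝ) < Real.sqrt 2 := by positivity
  have A : Real.sqrt 2 * (2 * μ * t) * Real.pi < 4 * Real.sqrt 2 * t ^ 2 := by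
    nlinarith [hmt, mul_pos hS htpos]
  have B : 16 * Real.sqrt 2 * t ^ 2 < Real.pi * Real.exp 1 ^ 2 * t ^ 2 := by
    nlinarith [num_key, mul_pos htpos htpos]
  have hq := exp_quad t htpos.le
  refine h1.trans_le ?_
  rw [hLt]
  nlinarith [A, B, hq, Real.pi_pos]

lemma main_aux : ∀ l : ℕ, 1 ≤ l → ∀ m : ℕ, 1 ≤ m → ∀ z : ℂ,
    expIter l ((m : ℝ) ^ 2 * Real.pi) < ‖z‖ →
    ‖logIter l z‖ < ‖z‖ ^ (1 / (2 ^ l * m) : ℝ) := by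
  intro l hl
  induction l, hl using Nat.le_induction with
  | base =>
      intro m hm z hz
      have hm1 : (1 : ℝ) ≤ (m : ℝ) := by exact_mod_cast hm
      have hz' : Real.exp ((m : ℝ) ^ 2 * Real.pi) < ‖z‖ := by
        simpa [expIter] using hz
      have := base_case (m : ℝ) hm1 z hz'
      have hexp : (1 / (2 ^ 1 * (m : ℝ)) : ℝ) = 1 / (2 * (m : ℝ)) := by norm_num
      simpa [logIter, hexp] using this
  | succ n hn IH =>
      intro m hm z hz
      have hm1 : (1 : ℝ) ≤ (m : ℝ) := by exact_mod_cast hm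
      set a := (m : ℝ) ^ 2 * Real.pi with ha_def
      have hmu2 : (1:ℝ) ≤ (m:ℝ) ^ 2 := by nlinarith
      have hpia : Real.pi ≤ a := by rw [ha_def]; nlinarith [Real.pi_pos]
      have ha : 0 < a := lt_of_lt_of_le Real.pi_pos hpia
      have hEa : a ≤ expIter n a := self_le_expIter n a
      have hz' : Real.exp (expIter n a) < ‖z‖ := by
        simpa [expIter] using hz
      have hr0 : 0 < ‖z‖ := lt_trans (Real.exp_pos _) hz'
      have hLgt : expIter n a < Real.log (‖z‖) :=
        (Real.lt_log_iff_exp_lt hr0).2 hz'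
      have hlogle : Real.log (‖z‖) ≤ ‖Complex.log z‖ := by
        rw [← Complex.log_re]
        exact (le_abs_self _).trans (Complex.abs_re_le_norm _)
      have hlogabs : expIter n a < ‖Complex.log z‖ :=
        lt_of_lt_of_le hLgt hlogle
      have habs1 := IH m hm (Complex.log z) hlogabs
      -- |log z| < |z| ^ (1/2)
      have hzpi : Real.exp ((1 : ℝ) ^ 2 * Real.pi) < ‖z‖ := by
        refine lt_of_le_of_lt ?_ hz'
        apply Real.exp_le_exp.2
        simpa using le_trans hpia hEa
      have hhalf : ‖Complex.log z‖ < ‖z‖ ^ ((1 : ℝ) / 2) := by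
        have := base_case 1 le_rfl z hzpi
        simpa using this
      have hc0 : (0 : ℝ) ≤ 1 / (2 ^ n * m) := by positivity
      calc ‖logIter (n + 1) z‖
          = ‖logIter n (Complex.log z)‖ := by rw [logIter_shift]
        _ < ‖Complex.log z‖ ^ (1 / (2 ^ n * m) : ℝ) := habs1
        _ ≤ (‖z‖ ^ ((1 : ℝ) / 2)) ^ (1 / (2 ^ n * m) : ℝ) :=
            Real.rpow_le_rpow (norm_nonneg _) hhalf.le hc0
        _ = ‖z‖ ^ ((1 / 2 : ℝ) * (1 / (2 ^ n * m) : ℝ)) :=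
            (Real.rpow_mul hr0.le _ _).symm
        _ = ‖z‖ ^ (1 / (2 ^ (n + 1) * m) : ℝ) := by
            congr 1
            rw [pow_succ]
            have hm0 : (m : ℝ) ≠ 0 := by positivity
            have h2 : ((2 : ℝ) ^ n) ≠ 0 := by positivity
            field_simp

/-- **Claim 1** in the proof of Proposition 5.81: let `l, m ≥ 1` and `z ∈ ℂ⁻` with
`exp_l (m² · π) < |z|`. Then `|log^{[l]} z| < |z| ^ (1 / (2^l · m))` (real power of
the positive real `|z|`). -/
theorem abs_logIter_lt_rpow (l m : ℕ) (hl : 1 ≤ l) (hm : 1 ≤ m) (z : ℂ)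
    (hz : z ∈ Complex.slitPlane)
    (hzabs : expIter l ((m : ℝ) ^ 2 * Real.pi) < ‖z‖) :
    ‖logIter l z‖ < ‖z‖ ^ (1 / (2 ^ l * m) : ℝ) :=
  main_aux l hl m hm z hzabs
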